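/- Let (S, C) be an instance with S = (U_S, V_S), C = (U_C, V_C), and suppose the subgraph induced by S has at most k non-edges, i.e., |Ē_S| ≤ k. For w ∈ U_C let d̄_S(w) = |{v ∈ V_S : (w, v) ∉ E}|, and let σ(i) denote the sum of the i smallest values of d̄_S over U_C (counted with multiplicity); define i* as the largest i ∈ {0, 1, …, |U_C|} with σ(i) ≤ k − |Ē_S|, and define j* symmetrically for V_C. Then every k-defective biclique D = (U_D, V_D) with U_S ⊆ U_D ⊆ U_S ∪ U_C and V_S ⊆ V_D ⊆ V_S ∪ V_C satisfies |U_D| ≤ |U_S| + i* and |V_D| ≤ |V_S| + j*. -/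

import Mathlib

/-- The number of non-neighbors of `w ∈ U` in `V_S` (with respect to the edge set `E`). -/
def dbarU {α β : Type*} [DecidableEq α] [DecidableEq β]
    (E : Finset (α × β)) (VS : Finset β) (w : α) : ℕ :=
  (VS.filter (fun v => (w, v) ∉ E)).card

/-- The number of non-neighbors of `w ∈ V` in `U_S` (with respect to the edge set `E`). -/
def dbarV {α β : Type*} [DecidableEq α] [DecidableEq β]
    (E : Finset (α × β)) (US : Finset α) (w : β) : ℕ :=
  (US.filter (fun u => (u, w) ∉ E)).card

/-- The sum of the `i` smallest values (with multiplicity) of `f` over the finset `s`. -/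
def smallSum {γ : Type*} (s : Finset γ) (f : γ → ℕ) (i : ℕ) : ℕ :=
  (((s.val.map f).sort (· ≤ ·)).take i).sum

lemma take_sum_le_of_sorted_cons (a : ℕ) (l : List ℕ)
    (h : (a :: l).Pairwise (· ≤ ·)) :
    ∀ n ≤ l.length, ((a :: l).take n).sum ≤ (l.take n).sum := by
  intro n hn
  cases n with
  | zero => simp
  | succ m =>
    simp only [List.take_succ_cons, List.sum_cons]
    rw [List.take_succ]
    have hm : m < l.length := hn
    rw [List.getElem?_eq_getElem hm]
    simp only [Option.toList_some, List.sum_append, List.sum_cons, List.sum_nil, add_zero]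
    have ha : a ≤ l[m] := (List.pairwise_cons.mp h).1 _ (List.getElem_mem hm)
    omega

lemma take_sum_le_of_sublist {l₁ l₂ : List ℕ} (h : List.Sublist l₁ l₂)
    (h₂ : l₂.Pairwise (· ≤ ·)) :
    (l₂.take l₁.length).sum ≤ l₁.sum := by
  induction h with
  | slnil => simp
  | cons a h ih =>
    rename_i t₁ t₂
    have hs : t₂.Pairwise (· ≤ ·) := (List.pairwise_cons.mp h₂).2
    exact le_trans
      (take_sum_le_of_sorted_cons a t₂ h₂ t₁.length h.length_le) (ih hs)
  | cons_cons a h ih =>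
    rename_i t₁ t₂
    have hs : t₂.Pairwise (· ≤ ·) := (List.pairwise_cons.mp h₂).2
    simp only [List.length_cons, List.take_succ_cons, List.sum_cons]
    exact add_le_add_right (ih hs) a

lemma smallSum_le_sum {γ : Type*} [DecidableEq γ] {s X : Finset γ} (hX : X ⊆ s)
    (f : γ → ℕ) : smallSum s f X.card ≤ ∑ x ∈ X, f x := by
  set L₁ := (X.val.map f).sort (· ≤ ·) with hL₁
  set L₂ := (s.val.map f).sort (· ≤ ·) with hL₂
  have hsub : List.Subperm L₁ L₂ := by
    rw [← Multiset.coe_le, hL₁, hL₂, Multiset.sort_eq, Multiset.sort_eq]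
    exact Multiset.map_le_map (Finset.val_le_iff.mpr hX)
  have hsl : List.Sublist L₁ L₂ :=
    List.sublist_of_subperm_of_pairwise hsub
      (Multiset.pairwise_sort _ _) (Multiset.pairwise_sort _ _)
  have hlen : L₁.length = X.card := by
    rw [hL₁, Multiset.length_sort, Multiset.card_map]; rfl
  have := take_sum_le_of_sublist hsl (Multiset.pairwise_sort _ _)
  rw [hlen] at this
  calc smallSum s f X.card ≤ L₁.sum := this
    _ = ∑ x ∈ X, f x := by
        rw [hL₁]
        rw [← Multiset.sum_coe, Multiset.sort_eq]
        rfl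

theorem vertex_upper_bounds {α β : Type*} [DecidableEq α] [DecidableEq β]
    (E : Finset (α × β)) (k : ℕ)
    (US UC : Finset α) (VS VC : Finset β)
    (hUdisj : Disjoint US UC) (hVdisj : Disjoint VS VC)
    (hES : ((US ×ˢ VS) \ E).card ≤ k)
    (istar : ℕ) (histar1 : istar ≤ UC.card)
    (histar2 : smallSum UC (dbarU E VS) istar ≤ k - ((US ×ˢ VS) \ E).card)
    (histar3 : ∀ i ≤ UC.card,
      smallSum UC (dbarU E VS) i ≤ k - ((US ×ˢ VS) \ E).card → i ≤ istar)
    (jstar : ℕ) (hjstar1 : jstar ≤ VC.card)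
    (hjstar2 : smallSum VC (dbarV E US) jstar ≤ k - ((US ×ˢ VS) \ E).card)
    (hjstar3 : ∀ j ≤ VC.card,
      smallSum VC (dbarV E US) j ≤ k - ((US ×ˢ VS) \ E).card → j ≤ jstar)
    (UD : Finset α) (VD : Finset β)
    (hU1 : US ⊆ UD) (hU2 : UD ⊆ US ∪ UC) (hV1 : VS ⊆ VD) (hV2 : VD ⊆ VS ∪ VC)
    (hdef : ((UD ×ˢ VD) \ E).card ≤ k) :
    UD.card ≤ US.card + istar ∧ VD.card ≤ VS.card + jstar := by
  set A := (US ×ˢ VS) \ E with hA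
  -- U side
  have hUbound : UD.card ≤ US.card + istar := by
    set X := UD \ US with hX
    have hXC : X ⊆ UC := by
      intro x hx
      rw [hX, Finset.mem_sdiff] at hx
      rcases Finset.mem_union.mp (hU2 hx.1) with h | h
      · exact absurd h hx.2
      · exact h
    have hcard : UD.card = US.card + X.card := by
      have h := Finset.card_sdiff_add_card_eq_card hU1
      rw [← hX] at h
      omega
    -- sum of dbarU over X equals card of ((X ×ˢ VS) \ E)
    have hsum : ((X ×ˢ VS) \ E).card = ∑ w ∈ X, dbarU E VS w := by
      rw [Finset.sdiff_eq_filter, Finset.card_filter, Finset.sum_product]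
      simp only [dbarU, Finset.card_filter]
    -- disjoint subsets
    have hdisjAB : Disjoint A ((X ×ˢ VS) \ E) := by
      apply Finset.disjoint_left.mpr
      intro p hp hp'
      rw [hA, Finset.mem_sdiff, Finset.mem_product] at hp
      rw [Finset.mem_sdiff, Finset.mem_product] at hp'
      have hXU : Disjoint US X := Finset.disjoint_sdiff
      exact (Finset.disjoint_left.mp hXU hp.1.1) hp'.1.1
    have hsubAB : A ∪ ((X ×ˢ VS) \ E) ⊆ (UD ×ˢ VD) \ E := by
      apply Finset.union_subset
      · intro p hp
        rw [hA, Finset.mem_sdiff, Finset.mem_product] at hp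
        rw [Finset.mem_sdiff, Finset.mem_product]
        exact ⟨⟨hU1 hp.1.1, hV1 hp.1.2⟩, hp.2⟩
      · intro p hp
        rw [Finset.mem_sdiff, Finset.mem_product] at hp
        rw [Finset.mem_sdiff, Finset.mem_product]
        exact ⟨⟨(Finset.sdiff_subset) hp.1.1, hV1 hp.1.2⟩, hp.2⟩
    have hle : A.card + ((X ×ˢ VS) \ E).card ≤ k := by
      calc A.card + ((X ×ˢ VS) \ E).card
          = (A ∪ ((X ×ˢ VS) \ E)).card := (Finset.card_union_of_disjoint hdisjAB).symm
        _ ≤ ((UD ×ˢ VD) \ E).card := Finset.card_le_card hsubAB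
        _ ≤ k := hdef
    have hX1 : X.card ≤ UC.card := Finset.card_le_card hXC
    have hX2 : smallSum UC (dbarU E VS) X.card ≤ k - A.card := by
      calc smallSum UC (dbarU E VS) X.card ≤ ∑ w ∈ X, dbarU E VS w :=
            smallSum_le_sum hXC _
        _ = ((X ×ˢ VS) \ E).card := hsum.symm
        _ ≤ k - A.card := by omega
    have hfin : X.card ≤ istar := histar3 X.card hX1 hX2
    rw [hcard]
    exact Nat.add_le_add_left hfin US.card
  -- V side
  have hVbound : VD.card ≤ VS.card + jstar := by
    set Y := VD \ VS with hY
    have hYC : Y ⊆ VC := by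
      intro y hy
      rw [hY, Finset.mem_sdiff] at hy
      rcases Finset.mem_union.mp (hV2 hy.1) with h | h
      · exact absurd h hy.2
      · exact h
    have hcard : VD.card = VS.card + Y.card := by
      have h := Finset.card_sdiff_add_card_eq_card hV1
      rw [← hY] at h
      omega
    have hsum : ((US ×ˢ Y) \ E).card = ∑ v ∈ Y, dbarV E US v := by
      rw [Finset.sdiff_eq_filter, Finset.card_filter, Finset.sum_product_right]
      simp only [dbarV, Finset.card_filter]
    have hdisjAB : Disjoint A ((US ×ˢ Y) \ E) := by
      apply Finset.disjoint_left.mpr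
      intro p hp hp'
      rw [hA, Finset.mem_sdiff, Finset.mem_product] at hp
      rw [Finset.mem_sdiff, Finset.mem_product] at hp'
      have hYV : Disjoint VS Y := Finset.disjoint_sdiff
      exact (Finset.disjoint_left.mp hYV hp.1.2) hp'.1.2
    have hsubAB : A ∪ ((US ×ˢ Y) \ E) ⊆ (UD ×ˢ VD) \ E := by
      apply Finset.union_subset
      · intro p hp
        rw [hA, Finset.mem_sdiff, Finset.mem_product] at hp
        rw [Finset.mem_sdiff, Finset.mem_product]
        exact ⟨⟨hU1 hp.1.1, hV1 hp.1.2⟩, hp.2⟩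
      · intro p hp
        rw [Finset.mem_sdiff, Finset.mem_product] at hp
        rw [Finset.mem_sdiff, Finset.mem_product]
        exact ⟨⟨hU1 hp.1.1, (Finset.sdiff_subset) hp.1.2⟩, hp.2⟩
    have hle : A.card + ((US ×ˢ Y) \ E).card ≤ k := by
      calc A.card + ((US ×ˢ Y) \ E).card
          = (A ∪ ((US ×ˢ Y) \ E)).card := (Finset.card_union_of_disjoint hdisjAB).symm
        _ ≤ ((UD ×ˢ VD) \ E).card := Finset.card_le_card hsubAB
        _ ≤ k := hdef
    have hY1 : Y.card ≤ VC.card := Finset.card_le_card hYC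
    have hY2 : smallSum VC (dbarV E US) Y.card ≤ k - A.card := by
      calc smallSum VC (dbarV E US) Y.card ≤ ∑ v ∈ Y, dbarV E US v :=
            smallSum_le_sum hYC _
        _ = ((US ×ˢ Y) \ E).card := hsum.symm
        _ ≤ k - A.card := by omega
    have hfin : Y.card ≤ jstar := hjstar3 Y.card hY1 hY2
    rw [hcard]
    exact Nat.add_le_add_left hfin VS.card
  exact ⟨hUbound, hVbound⟩
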